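/- Let σ : ℝ → ℝ be continuous, nonnegative, and even, and fix m R > 0 and integers k₁,…,k_M. Then the function F(t) = Σ_{a=1}^M (mR cosh t_a + 2π k_a t_a) + Σ_{a<b} P(t_a - t_b) (with P as above, P'' = σ ≥ 0, P even) attains a unique global minimum on ℝ^M; consequently the system of Bethe-type equations 2π k_a + mR sinh t_a + Σ_{b≠a} P'(t_a - t_b) = 0 (a = 1,…,M) has a solution. -/

import Mathlib

open Finset

private lemma cosh_quad_lb (x : ℝ) : (1 + |x|/2)^2/2 ≤ Real.cosh x := by
  have h1 : (1 + |x|/2) ≤ Real.exp (|x|/2) := by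
    have := Real.add_one_le_exp (|x|/2); linarith
  have h2 : (1 + |x|/2)^2 ≤ Real.exp (|x|/2)^2 :=
    pow_le_pow_left₀ (by positivity) h1 2
  have h3 : Real.exp (|x|/2)^2 = Real.exp |x| := by
    rw [sq, ← Real.exp_add]; ring_nf
  have h4 : Real.exp |x| ≤ 2 * Real.cosh x := by
    rw [← Real.cosh_abs, Real.cosh_eq]
    have := (Real.exp_pos (-|x|)).le; linarith
  linarith

private lemma strictConvexOn_cosh' : StrictConvexOn ℝ Set.univ Real.cosh :=
  strictConvexOn_univ_of_deriv2_pos Real.continuous_cosh (fun x => by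
    simp [Function.iterate_succ, Real.deriv_cosh, Real.deriv_sinh]
    exact Real.cosh_pos x)

private lemma deriv_odd_of_even {P : ℝ → ℝ} (hPeven : ∀ x, P (-x) = P x) (x : ℝ) :
    deriv P (-x) = - deriv P x := by
  have h : (fun y => P (-y)) = P := funext fun y => hPeven y
  have := deriv_comp_neg (f := P) (x := x)
  rw [h] at this
  linarith

private lemma hasDerivAt_phi {M : ℕ} (m R : ℝ) (k : Fin M → ℤ) (P : ℝ → ℝ)
    (hPd : Differentiable ℝ P) (hPodd : ∀ x, deriv P (-x) = - deriv P x)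
    (t : Fin M → ℝ) (a : Fin M) (x : ℝ) :
    HasDerivAt (fun y => (∑ c, (m * R * Real.cosh (Function.update t a y c) +
        2 * Real.pi * (k c : ℝ) * (Function.update t a y c))) +
        ∑ c, ∑ b, if c < b then P (Function.update t a y c - Function.update t a y b) else 0)
      (2 * Real.pi * (k a : ℝ) + m * R * Real.sinh x +
        ∑ b ∈ univ.filter (· ≠ a), deriv P (x - t b)) x := by
  have hA : ∀ c ∈ (univ : Finset (Fin M)), HasDerivAt
      (fun y => m * R * Real.cosh (Function.update t a y c) +
        2 * Real.pi * (k c : ℝ) * (Function.update t a y c))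
      (if c = a then m * R * Real.sinh x + 2 * Real.pi * (k a : ℝ) else 0) x := by
    intro c _
    by_cases hc : c = a
    · rw [hc, if_pos rfl]
      simp only [Function.update_self]
      have h := ((Real.hasDerivAt_cosh x).const_mul (m * R)).fun_add
        ((hasDerivAt_id x).const_mul (2 * Real.pi * (k a : ℝ)))
      simpa using h
    · have heq : (fun y => m * R * Real.cosh (Function.update t a y c) +
          2 * Real.pi * (k c : ℝ) * (Function.update t a y c)) =
          fun _ => m * R * Real.cosh (t c) + 2 * Real.pi * (k c : ℝ) * (t c) := by
        funext y; rw [Function.update_of_ne hc]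
      rw [heq, if_neg hc]; exact hasDerivAt_const x _
  have hB : ∀ c b : Fin M, HasDerivAt
      (fun y => if c < b then P (Function.update t a y c - Function.update t a y b) else 0)
      (if c < b then (if c = a then deriv P (x - t b) else
        if b = a then deriv P (x - t c) else 0) else 0) x := by
    intro c b
    by_cases hcb : c < b
    · simp only [if_pos hcb]
      by_cases hc : c = a
      · have hb : b ≠ a := by rw [hc] at hcb; exact ne_of_gt hcb
        rw [if_pos hc]
        have heq : (fun y => P (Function.update t a y c - Function.update t a y b)) =
            fun y : ℝ => P (y - t b) := by
          funext y; rw [hc, Function.update_self, Function.update_of_ne hb]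
        rw [heq]
        have h1 : HasDerivAt (fun y : ℝ => y - t b) 1 x := (hasDerivAt_id x).sub_const _
        have h2 : HasDerivAt P (deriv P (x - t b)) (x - t b) := (hPd _).hasDerivAt
        simpa [Function.comp_def] using h2.comp x h1
      · by_cases hb : b = a
        · rw [if_neg hc, if_pos hb]
          have heq : (fun y => P (Function.update t a y c - Function.update t a y b)) =
              fun y : ℝ => P (t c - y) := by
            funext y; rw [hb, Function.update_self, Function.update_of_ne hc]
          rw [heq]
          have h1 : HasDerivAt (fun y : ℝ => t c - y) (-1) x := (hasDerivAt_id x).const_sub _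
          have h2 : HasDerivAt P (deriv P (t c - x)) (t c - x) := (hPd _).hasDerivAt
          have h3 := h2.comp x h1
          have h4 : deriv P (t c - x) * (-1) = deriv P (x - t c) := by
            have h5 := hPodd (x - t c)
            rw [show -(x - t c) = t c - x by ring] at h5; linarith
          rw [h4] at h3
          simpa [Function.comp_def] using h3
        · have heq : (fun y => P (Function.update t a y c - Function.update t a y b)) =
              fun _ => P (t c - t b) := by
            funext y; rw [Function.update_of_ne hc, Function.update_of_ne hb]
          rw [heq, if_neg hc, if_neg hb]
          exact hasDerivAt_const x _
    · simp only [if_neg hcb]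
      exact hasDerivAt_const x _
  have inner : ∀ c ∈ (univ : Finset (Fin M)), HasDerivAt
      (fun y => ∑ b, if c < b then P (Function.update t a y c - Function.update t a y b) else 0)
      (∑ b, if c < b then (if c = a then deriv P (x - t b) else
        if b = a then deriv P (x - t c) else 0) else 0) x :=
    fun c _ => HasDerivAt.fun_sum (fun b _ => hB c b)
  have total := (HasDerivAt.fun_sum hA).fun_add (HasDerivAt.fun_sum inner)
  have e1 : ∑ c, (if c = a then m * R * Real.sinh x + 2 * Real.pi * (k a : ℝ) else 0) =
      m * R * Real.sinh x + 2 * Real.pi * (k a : ℝ) := by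
    simp
  have point : ∀ c b : Fin M, (if c < b then (if c = a then deriv P (x - t b) else
        if b = a then deriv P (x - t c) else 0) else 0) =
      (if c = a then (if a < b then deriv P (x - t b) else 0) else 0) +
      (if b = a then (if c < a then deriv P (x - t c) else 0) else 0) := by
    intro c b
    by_cases h1 : c = a <;> by_cases h2 : b = a <;> by_cases h3 : c < b <;>
      simp_all
  have e2 : (∑ c, ∑ b, (if c < b then (if c = a then deriv P (x - t b) else
        if b = a then deriv P (x - t c) else 0) else 0)) =
      ∑ b ∈ univ.filter (· ≠ a), deriv P (x - t b) := by
    simp only [point, Finset.sum_add_distrib]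
    have e3 : (∑ c, ∑ b, (if c = a then (if a < b then deriv P (x - t b) else 0) else 0)) =
        ∑ b : Fin M, (if a < b then deriv P (x - t b) else 0) := by
      rw [Finset.sum_eq_single a]
      · simp
      · intro c _ hc; simp [hc]
      · intro h; exact absurd (mem_univ a) h
    have e4 : (∑ c, ∑ b, (if b = a then (if c < a then deriv P (x - t c) else 0) else 0)) =
        ∑ c : Fin M, (if c < a then deriv P (x - t c) else 0) := by
      apply Finset.sum_congr rfl
      intro c _
      simp
    rw [e3, e4, ← Finset.sum_add_distrib, Finset.sum_filter]
    apply Finset.sum_congr rfl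
    intro b _
    rcases lt_trichotomy a b with h | h | h
    · simp [h, not_lt.mpr h.le, h.ne']
    · simp [h]
    · simp [h, not_lt.mpr h.le, h.ne]
  rw [e1, e2] at total
  convert total using 1
  · rfl
  · rfl
  ring

theorem bethe_min_exists_unique (M : ℕ) (m R : ℝ) (hmR : 0 < m * R)
    (k : Fin M → ℤ) (σ P : ℝ → ℝ)
    (hσcont : Continuous σ) (hσ : ∀ x, 0 ≤ σ x) (hσeven : ∀ x, σ (-x) = σ x)
    (hP : ContDiff ℝ 2 P) (hPeven : ∀ x, P (-x) = P x)
    (hP'' : ∀ x, deriv (deriv P) x = σ x)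
    (F : (Fin M → ℝ) → ℝ)
    (hF : ∀ t, F t = (∑ a, (m * R * Real.cosh (t a) + 2 * Real.pi * (k a : ℝ) * t a)) +
        ∑ a, ∑ b, if a < b then P (t a - t b) else 0) :
    (∃! t : Fin M → ℝ, ∀ s : Fin M → ℝ, F t ≤ F s) ∧
    (∃ t : Fin M → ℝ, ∀ a, 2 * Real.pi * (k a : ℝ) + m * R * Real.sinh (t a) +
        ∑ b ∈ univ.filter (· ≠ a), deriv P (t a - t b) = 0) := by
  -- basic facts about P
  have hPd : Differentiable ℝ P := hP.differentiable (by norm_num)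
  have hPd' : Differentiable ℝ (deriv P) := by
    have h2 : ContDiff ℝ (1+1) P := by exact_mod_cast hP
    obtain ⟨h1, _, h3⟩ := contDiff_succ_iff_deriv.mp h2
    exact h3.differentiable one_ne_zero
  have hPconv : ConvexOn ℝ Set.univ P := by
    apply convexOn_univ_of_deriv2_nonneg hPd hPd'
    intro x
    have h : deriv^[2] P x = deriv (deriv P) x := by
      simp [Function.iterate_succ]
    rw [h, hP'']
    exact hσ x
  have hPodd : ∀ x, deriv P (-x) = - deriv P x := deriv_odd_of_even hPeven
  have hPmid : ∀ u v : ℝ, P ((u + v)/2) ≤ P u / 2 + P v / 2 := by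
    intro u v
    have h := hPconv.2 (Set.mem_univ u) (Set.mem_univ v)
      (by norm_num : (0:ℝ) ≤ 1/2) (by norm_num : (0:ℝ) ≤ 1/2) (by norm_num : (1/2:ℝ) + 1/2 = 1)
    simp only [smul_eq_mul] at h
    rw [show (1/2:ℝ) * u + (1/2:ℝ) * v = (u + v)/2 by ring] at h
    linarith
  have hP0 : ∀ x, P 0 ≤ P x := by
    intro x
    have h := hPmid x (-x)
    rw [hPeven x] at h
    rw [show (x + -x)/2 = (0:ℝ) by ring] at h
    linarith
  -- cosh convexity facts
  have hcoshmid : ∀ u v : ℝ, Real.cosh ((u + v)/2) ≤ Real.cosh u / 2 + Real.cosh v / 2 := by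
    intro u v
    have h := strictConvexOn_cosh'.convexOn.2 (Set.mem_univ u) (Set.mem_univ v)
      (by norm_num : (0:ℝ) ≤ 1/2) (by norm_num : (0:ℝ) ≤ 1/2) (by norm_num : (1/2:ℝ) + 1/2 = 1)
    simp only [smul_eq_mul] at h
    rw [show (1/2:ℝ) * u + (1/2:ℝ) * v = (u + v)/2 by ring] at h
    linarith
  have hcoshmid' : ∀ u v : ℝ, u ≠ v →
      Real.cosh ((u + v)/2) < Real.cosh u / 2 + Real.cosh v / 2 := by
    intro u v huv
    have h := strictConvexOn_cosh'.2 (Set.mem_univ u) (Set.mem_univ v) huv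
      (by norm_num : (0:ℝ) < 1/2) (by norm_num : (0:ℝ) < 1/2) (by norm_num : (1/2:ℝ) + 1/2 = 1)
    simp only [smul_eq_mul] at h
    rw [show (1/2:ℝ) * u + (1/2:ℝ) * v = (u + v)/2 by ring] at h
    linarith
  -- degenerate case
  rcases Nat.eq_zero_or_pos M with hM0 | hM
  · have hsub : ∀ u v : Fin M → ℝ, u = v := fun u v => funext fun i => absurd i.isLt (by omega)
    constructor
    · exact ⟨fun _ => 0, fun s => le_of_eq (congrArg F (hsub _ s)), fun y _ => hsub y _⟩
    · exact ⟨fun _ => 0, fun a => absurd a.isLt (by omega)⟩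
  haveI : Nonempty (Fin M) := ⟨⟨0, hM⟩⟩
  -- uniqueness from strict convexity
  have key2 : ∀ t s : Fin M → ℝ, (∀ u, F t ≤ F u) → (∀ u, F s ≤ F u) → t = s := by
    intro t s ht hs
    by_contra hne
    obtain ⟨a₀, ha₀⟩ := Function.ne_iff.mp hne
    set z : Fin M → ℝ := fun i => (t i + s i)/2 with hz
    have hAle : ∀ a : Fin M, m * R * Real.cosh (z a) + 2 * Real.pi * (k a : ℝ) * z a ≤
        (m * R * Real.cosh (t a) + 2 * Real.pi * (k a : ℝ) * t a)/2 +
        (m * R * Real.cosh (s a) + 2 * Real.pi * (k a : ℝ) * s a)/2 := by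
      intro a
      have hc := hcoshmid (t a) (s a)
      have hmul := mul_le_mul_of_nonneg_left hc hmR.le
      show m * R * Real.cosh ((t a + s a)/2) + 2 * Real.pi * (k a : ℝ) * ((t a + s a)/2) ≤ _
      nlinarith [hmul]
    have hAlt : m * R * Real.cosh (z a₀) + 2 * Real.pi * (k a₀ : ℝ) * z a₀ <
        (m * R * Real.cosh (t a₀) + 2 * Real.pi * (k a₀ : ℝ) * t a₀)/2 +
        (m * R * Real.cosh (s a₀) + 2 * Real.pi * (k a₀ : ℝ) * s a₀)/2 := by
      have hc := hcoshmid' (t a₀) (s a₀) ha₀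
      have hmul := mul_lt_mul_of_pos_left hc hmR
      show m * R * Real.cosh ((t a₀ + s a₀)/2) + 2 * Real.pi * (k a₀ : ℝ) * ((t a₀ + s a₀)/2) < _
      nlinarith [hmul]
    have SA : (∑ a, (m * R * Real.cosh (z a) + 2 * Real.pi * (k a : ℝ) * z a)) <
        ∑ a, ((m * R * Real.cosh (t a) + 2 * Real.pi * (k a : ℝ) * t a)/2 +
          (m * R * Real.cosh (s a) + 2 * Real.pi * (k a : ℝ) * s a)/2) :=
      Finset.sum_lt_sum (fun a _ => hAle a) ⟨a₀, mem_univ a₀, hAlt⟩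
    have SP : (∑ a, ∑ b, if a < b then P (z a - z b) else 0) ≤
        ∑ a, ∑ b, if a < b then P (t a - t b)/2 + P (s a - s b)/2 else 0 := by
      apply Finset.sum_le_sum; intro a _
      apply Finset.sum_le_sum; intro b _
      by_cases hab : a < b
      · simp only [if_pos hab]
        have h := hPmid (t a - t b) (s a - s b)
        have harg : z a - z b = ((t a - t b) + (s a - s b))/2 := by
          show (t a + s a)/2 - (t b + s b)/2 = _; ring
        rw [harg]; exact h
      · simp [hab]
    have e1 : (∑ a, ((m * R * Real.cosh (t a) + 2 * Real.pi * (k a : ℝ) * t a)/2 +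
          (m * R * Real.cosh (s a) + 2 * Real.pi * (k a : ℝ) * s a)/2)) =
        (∑ a, (m * R * Real.cosh (t a) + 2 * Real.pi * (k a : ℝ) * t a))/2 +
        (∑ a, (m * R * Real.cosh (s a) + 2 * Real.pi * (k a : ℝ) * s a))/2 := by
      rw [Finset.sum_add_distrib, ← Finset.sum_div, ← Finset.sum_div]
    have e2 : (∑ a, ∑ b, if a < b then P (t a - t b)/2 + P (s a - s b)/2 else 0) =
        (∑ a, ∑ b, if a < b then P (t a - t b) else 0)/2 +
        (∑ a, ∑ b, if a < b then P (s a - s b) else 0)/2 := by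
      have pt : ∀ a b : Fin M, (if a < b then P (t a - t b)/2 + P (s a - s b)/2 else 0) =
          (if a < b then P (t a - t b) else 0)/2 + (if a < b then P (s a - s b) else 0)/2 := by
        intro a b; by_cases hab : a < b <;> simp [hab]
      simp only [pt, Finset.sum_add_distrib, ← Finset.sum_div]
    have hFz : F z < F t / 2 + F s / 2 := by
      rw [hF z, hF t, hF s]
      rw [e1] at SA
      rw [e2] at SP
      linarith
    have h1 := ht z
    have hts : F t = F s := le_antisymm (ht s) (hs t)
    linarith
  -- coercivity
  set B : ℝ := ((univ.sup fun a => (k a).natAbs : ℕ) : ℝ) with hBdef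
  have hB0 : 0 ≤ B := Nat.cast_nonneg _
  set K : ℝ := 2 * Real.pi * B with hKdef
  have hK0 : 0 ≤ K := by
    have := Real.pi_pos; positivity
  have hkK : ∀ a, |2 * Real.pi * (k a : ℝ)| ≤ K := by
    intro a
    have h1 : ((k a).natAbs : ℝ) ≤ B := Nat.cast_le.mpr (Finset.le_sup (f := fun a => (k a).natAbs) (mem_univ a))
    have h2 : |(k a : ℝ)| ≤ B := by rwa [Nat.cast_natAbs, Int.cast_abs] at h1
    have hpi := Real.pi_pos
    rw [abs_mul, abs_of_pos (by positivity : (0:ℝ) < 2 * Real.pi), hKdef]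
    nlinarith
  have hterm : ∀ (a : Fin M) (x : ℝ), m * R * Real.cosh x - K * |x| ≤
      m * R * Real.cosh x + 2 * Real.pi * (k a : ℝ) * x := by
    intro a x
    have h1 : |2 * Real.pi * (k a : ℝ) * x| ≤ K * |x| := by
      rw [abs_mul]
      exact mul_le_mul_of_nonneg_right (hkK a) (abs_nonneg x)
    have h2 := neg_abs_le (2 * Real.pi * (k a : ℝ) * x)
    linarith
  set q : ℝ → ℝ := fun u => m * R * ((1 + u/2)^2/2) - K * u with hqdef
  have hgq : ∀ x : ℝ, q |x| ≤ m * R * Real.cosh x - K * |x| := by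
    intro x
    have := mul_le_mul_of_nonneg_left (cosh_quad_lb x) hmR.le
    simp only [hqdef]
    linarith
  have hc₀ : ∀ x : ℝ, -(2 * K^2) / (m * R) ≤ m * R * Real.cosh x - K * |x| := by
    intro x
    rw [div_le_iff₀ hmR]
    nlinarith [sq_nonneg (m * R * |x| - 4 * K),
      mul_le_mul_of_nonneg_left (cosh_quad_lb x) hmR.le, abs_nonneg x,
      mul_nonneg (mul_pos hmR hmR).le (abs_nonneg x)]
  set c₀ : ℝ := -(2 * K^2) / (m * R) with hc₀def
  have hqtop : Filter.Tendsto q Filter.atTop Filter.atTop := by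
    apply Filter.tendsto_atTop_mono' Filter.atTop ?_ Filter.tendsto_id
    filter_upwards [Filter.eventually_ge_atTop ((8*(K+1))/(m*R)),
      Filter.eventually_ge_atTop (0:ℝ)] with u hu hu0
    have h1 : 8*(K+1) ≤ u * (m*R) := (div_le_iff₀ hmR).mp hu
    have h2 := mul_le_mul_of_nonneg_right h1 hu0
    show id u ≤ q u
    simp only [id, hqdef]
    nlinarith
  set CP : ℝ := ∑ a : Fin M, ∑ b : Fin M, if a < b then P 0 else 0 with hCPdef
  have hkey : ∀ t : Fin M → ℝ, q ‖t‖ + (((M:ℝ) - 1) * c₀ + CP) ≤ F t := by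
    intro t
    obtain ⟨a₀, -, ha₀⟩ := Finset.exists_mem_eq_sup (univ : Finset (Fin M))
      univ_nonempty (fun b => ‖t b‖₊)
    have hle : ∀ b, |t b| ≤ |t a₀| := by
      intro b
      have h := Finset.le_sup (f := fun b => ‖t b‖₊) (mem_univ b)
      rw [ha₀] at h
      have h' : ‖t b‖ ≤ ‖t a₀‖ := by exact_mod_cast h
      simpa [Real.norm_eq_abs] using h'
    have hnorm : ‖t‖ = |t a₀| := by
      apply le_antisymm
      · apply (pi_norm_le_iff_of_nonneg (abs_nonneg _)).mpr
        intro b; simpa [Real.norm_eq_abs] using hle b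
      · have h := norm_le_pi_norm t a₀
        simpa [Real.norm_eq_abs] using h
    have hsumA : (∑ a, (m * R * Real.cosh (t a) - K * |t a|)) ≤
        ∑ a, (m * R * Real.cosh (t a) + 2 * Real.pi * (k a : ℝ) * t a) :=
      Finset.sum_le_sum (fun a _ => hterm a (t a))
    have hsplit : (m * R * Real.cosh (t a₀) - K * |t a₀|) +
        ∑ a ∈ univ.erase a₀, (m * R * Real.cosh (t a) - K * |t a|) =
        ∑ a, (m * R * Real.cosh (t a) - K * |t a|) :=
      Finset.add_sum_erase (univ : Finset (Fin M)) (fun a => m * R * Real.cosh (t a) - K * |t a|) (mem_univ a₀)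
    have herase : ((M:ℝ) - 1) * c₀ ≤
        ∑ a ∈ univ.erase a₀, (m * R * Real.cosh (t a) - K * |t a|) := by
      have h1 : ∑ a ∈ univ.erase a₀, c₀ ≤
          ∑ a ∈ univ.erase a₀, (m * R * Real.cosh (t a) - K * |t a|) :=
        Finset.sum_le_sum (fun a _ => hc₀ (t a))
      have h2 : (univ.erase a₀).card = M - 1 := by
        rw [Finset.card_erase_of_mem (mem_univ a₀), card_univ, Fintype.card_fin]
      rw [Finset.sum_const, h2, nsmul_eq_mul, Nat.cast_sub hM, Nat.cast_one] at h1
      exact h1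
    have hCPle : CP ≤ ∑ a, ∑ b, if a < b then P (t a - t b) else 0 := by
      apply Finset.sum_le_sum; intro a _
      apply Finset.sum_le_sum; intro b _
      by_cases hab : a < b
      · simp only [if_pos hab]; exact hP0 _
      · simp [hab]
    have hq1 : q ‖t‖ ≤ m * R * Real.cosh (t a₀) - K * |t a₀| := by
      rw [hnorm]; exact hgq (t a₀)
    rw [hF t]
    linarith
  -- continuity of F
  have hFc : Continuous F := by
    have e : F = fun t => (∑ a, (m * R * Real.cosh (t a) + 2 * Real.pi * (k a : ℝ) * t a)) +
        ∑ a, ∑ b, if a < b then P (t a - t b) else 0 := funext hF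
    rw [e]
    apply Continuous.add
    · apply continuous_finset_sum; intro a _
      exact (continuous_const.mul (Real.continuous_cosh.comp (continuous_apply a))).add
        (continuous_const.mul (continuous_apply a))
    · apply continuous_finset_sum; intro a _
      apply continuous_finset_sum; intro b _
      by_cases hab : a < b
      · simp only [if_pos hab]
        exact hP.continuous.comp ((continuous_apply a).sub (continuous_apply b))
      · simp only [if_neg hab]; exact continuous_const
  have htop : Filter.Tendsto F (Filter.cocompact (Fin M → ℝ)) Filter.atTop := by
    apply Filter.tendsto_atTop_mono hkey
    exact Filter.tendsto_atTop_add_const_right _ _ (hqtop.comp tendsto_norm_cocompact_atTop)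
  obtain ⟨t₀, ht₀⟩ := hFc.exists_forall_le htop
  constructor
  · exact ⟨t₀, ht₀, fun y hy => key2 y t₀ hy ht₀⟩
  · refine ⟨t₀, fun a => ?_⟩
    have hloc : IsLocalMin (fun x => F (Function.update t₀ a x)) (t₀ a) := by
      apply Filter.Eventually.of_forall
      intro y
      show F (Function.update t₀ a (t₀ a)) ≤ _
      rw [Function.update_eq_self]
      exact ht₀ _
    have e : (fun x => F (Function.update t₀ a x)) =
        fun x => (∑ c, (m * R * Real.cosh (Function.update t₀ a x c) +
          2 * Real.pi * (k c : ℝ) * (Function.update t₀ a x c))) +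
          ∑ c, ∑ b, if c < b then
            P (Function.update t₀ a x c - Function.update t₀ a x b) else 0 :=
      funext fun x => hF _
    have hder := hasDerivAt_phi m R k P hPd hPodd t₀ a (t₀ a)
    rw [← e] at hder
    have h0 := hloc.deriv_eq_zero
    rw [hder.deriv] at h0
    exact h0
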